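/- For any Lie K-algebra M, the pair (M ⊗ M →^∂ M, ·) with ∂(m ⊗ m') = [m,m'] and action m·(m₁ ⊗ m₂) = m ⊗ [m₁,m₂] is a crossed module of Lie K-algebras, and the map (m, m') ↦ m ⊗ m' is a braiding on it. -/

import Mathlib

universe u

/-- The Lie bracket as a bilinear map. -/
def bracketMap (K : Type u) [CommRing K] (M : Type u) [LieRing M] [LieAlgebra K M] :
    M →ₗ[K] M →ₗ[K] M :=
  LinearMap.mk₂ K (fun a b => ⁅a, b⁆) add_lie smul_lie lie_add lie_smul

/-- Axioms for a crossed module of Lie `K`-algebras `(d : M → N, act)`. -/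
structure LieXMod (K : Type u) [CommRing K] (M N : Type u)
    [LieRing M] [LieAlgebra K M] [LieRing N] [LieAlgebra K N]
    (d : M →ₗ⁅K⁆ N) (act : N →ₗ[K] M →ₗ[K] M) : Prop where
  act_lie : ∀ n n' m, act ⁅n, n'⁆ m = act n (act n' m) - act n' (act n m)
  lie_act : ∀ n m m', act n ⁅m, m'⁆ = ⁅act n m, m'⁆ + ⁅m, act n m'⁆
  equivar : ∀ n m, d (act n m) = ⁅n, d m⁆
  peiffer : ∀ m m', act (d m) m' = ⁅m, m'⁆

/-- Axioms `BLie1`–`BLie6` for a braiding on a crossed module of Lie algebras. -/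
structure LieBraiding (K : Type u) [CommRing K] (M N : Type u)
    [LieRing M] [LieAlgebra K M] [LieRing N] [LieAlgebra K N]
    (d : M →ₗ⁅K⁆ N) (act : N →ₗ[K] M →ₗ[K] M)
    (br : N →ₗ[K] N →ₗ[K] M) : Prop where
  b1 : ∀ n n', d (br n n') = ⁅n, n'⁆
  b2 : ∀ m m', br (d m) (d m') = ⁅m, m'⁆
  b3 : ∀ m n, br (d m) n = - act n m
  b4 : ∀ n m, br n (d m) = act n m
  b5 : ∀ n n' n'', br n ⁅n', n''⁆ = br ⁅n, n'⁆ n'' - br ⁅n, n''⁆ n'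
  b6 : ∀ n n' n'', br ⁅n, n'⁆ n'' = br n ⁅n', n''⁆ - br n' ⁅n, n''⁆

/-- `T`, together with the bilinear pairing `t`, is the non-abelian tensor product
of the Lie algebras `A` and `B` acting on each other via `actAB` and `actBA`:
it satisfies the defining relations of the presentation and the universal property. -/
structure IsNATensor (K : Type u) [CommRing K] (A B : Type u)
    [LieRing A] [LieAlgebra K A] [LieRing B] [LieAlgebra K B]
    (actAB : A →ₗ[K] B →ₗ[K] B) (actBA : B →ₗ[K] A →ₗ[K] A)
    (T : Type u) [LieRing T] [LieAlgebra K T]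
    (t : A →ₗ[K] B →ₗ[K] T) : Prop where
  rel3a : ∀ a a' b, t ⁅a, a'⁆ b = t a (actAB a' b) - t a' (actAB a b)
  rel3b : ∀ a b b', t a ⁅b, b'⁆ = t (actBA b' a) b - t (actBA b a) b'
  rel4 : ∀ a b a' b', ⁅t a b, t a' b'⁆ = - t (actBA b a) (actAB a' b')
  lift : ∀ (C : Type u) [LieRing C] [LieAlgebra K C] (f : A →ₗ[K] B →ₗ[K] C),
      (∀ a a' b, f ⁅a, a'⁆ b = f a (actAB a' b) - f a' (actAB a b)) →
      (∀ a b b', f a ⁅b, b'⁆ = f (actBA b' a) b - f (actBA b a) b') →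
      (∀ a b a' b', ⁅f a b, f a' b'⁆ = - f (actBA b a) (actAB a' b')) →
      ∃! φ : T →ₗ⁅K⁆ C, ∀ a b, φ (t a b) = f a b

/-- `T` with pairing `t` is the non-abelian tensor square of `N` (adjoint actions). -/
def IsNATensorSq (K : Type u) [CommRing K] (N : Type u) [LieRing N] [LieAlgebra K N]
    (T : Type u) [LieRing T] [LieAlgebra K T] (t : N →ₗ[K] N →ₗ[K] T) : Prop :=
  IsNATensor K N N (bracketMap K N) (bracketMap K N) T t

/-- Auxiliary Jacobi-type identity. -/
lemma jac3_aux {M : Type u} [LieRing M] (a b c : M) :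
    ⁅a,⁅b,c⁆⁆ = ⁅⁅c,a⁆,b⁆ - ⁅⁅b,a⁆,c⁆ := by
  have h := lie_jacobi a b c
  have s1 : ⁅⁅c,a⁆,b⁆ = -⁅b,⁅c,a⁆⁆ := (lie_skew _ _).symm
  have s2 : ⁅⁅b,a⁆,c⁆ = -⁅c,⁅b,a⁆⁆ := (lie_skew _ _).symm
  have s3 : ⁅c,⁅b,a⁆⁆ = -⁅c,⁅a,b⁆⁆ := by rw [← lie_skew a b, lie_neg, neg_neg]
  linear_combination (norm := module) h - s1 + s2 - s3

theorem tensor_square_braided_crossed_module (K : Type u) [CommRing K]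
    (M : Type u) [LieRing M] [LieAlgebra K M]
    (T : Type u) [LieRing T] [LieAlgebra K T] (t : M →ₗ[K] M →ₗ[K] T)
    (hT : IsNATensorSq K M T t) :
    ∃ (dT : T →ₗ⁅K⁆ M) (actT : M →ₗ[K] T →ₗ[K] T),
      (∀ a b : M, dT (t a b) = ⁅a, b⁆) ∧
      (∀ m a b : M, actT m (t a b) = t m ⁅a, b⁆) ∧
      LieXMod K T M dT actT ∧ LieBraiding K T M dT actT t := by
  have hT' : IsNATensor K M M (bracketMap K M) (bracketMap K M) T t := hT
  have R3a : ∀ a a' b : M, t ⁅a,a'⁆ b = t a ⁅a',b⁆ - t a' ⁅a,b⁆ := hT'.rel3a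
  have R3b : ∀ a b b' : M, t a ⁅b,b'⁆ = t ⁅b',a⁆ b - t ⁅b,a⁆ b' := hT'.rel3b
  have R4 : ∀ a b a' b' : M, ⁅t a b, t a' b'⁆ = - t ⁅b,a⁆ ⁅a',b'⁆ := hT'.rel4
  -- sign lemmas
  have tneg : ∀ u v w : M, t ⁅u,v⁆ w = - t ⁅v,u⁆ w := by
    intro u v w; rw [← lie_skew u v, map_neg, LinearMap.neg_apply]
  have tneg2 : ∀ w u v : M, t w ⁅u,v⁆ = - t w ⁅v,u⁆ := by
    intro w u v; rw [← lie_skew u v, map_neg]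
  -- the key derived relation
  have star : ∀ x y z : M, t ⁅x,y⁆ z = t ⁅z,y⁆ x + t ⁅x,z⁆ y := by
    intro x y z
    have e1 := R3a x y z
    have e2 := R3b x y z
    have e3 := R3b y x z
    have n1 := tneg y x z
    have n2 := tneg x z y
    linear_combination (norm := module) -e1 - e2 + e3 + n1 - n2
  have hsym : ∀ u v w : M, t u ⁅v,w⁆ = - t ⁅v,w⁆ u := by
    intro u v w
    have hstar := star v w u
    have hr3b := R3b u v w
    have hn := tneg w u v
    linear_combination (norm := module) hstar + hr3b + hn
  -- construct dT
  obtain ⟨dT, hd, -⟩ := hT'.lift M (bracketMap K M)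
    (fun a a' b => lie_lie a a' b)
    (fun a b b' => jac3_aux a b b')
    (fun a b a' b' => by
      show ⁅⁅a,b⁆, ⁅a',b'⁆⁆ = -⁅⁅b,a⁆, ⁅a',b'⁆⁆
      rw [← lie_skew b a, neg_lie, neg_neg])
  have hd : ∀ a b : M, dT (t a b) = ⁅a,b⁆ := hd
  -- the action
  set actT : M →ₗ[K] T →ₗ[K] T := t.compl₁₂ LinearMap.id dT.toLinearMap with hactT
  have actT_apply : ∀ (m : M) (x : T), actT m x = t m (dT x) := fun _ _ => rfl
  -- span of the generators is everything
  have hlie : ∀ x ∈ Submodule.span K {x : T | ∃ a b, t a b = x},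
      ∀ y ∈ Submodule.span K {x : T | ∃ a b, t a b = x},
        ⁅x,y⁆ ∈ Submodule.span K {x : T | ∃ a b, t a b = x} := by
    intro x hx
    induction hx using Submodule.span_induction with
    | mem x hx =>
      obtain ⟨a, b, rfl⟩ := hx
      intro y hy
      induction hy using Submodule.span_induction with
      | mem y hy =>
        obtain ⟨a', b', rfl⟩ := hy
        rw [R4]
        exact neg_mem (Submodule.subset_span ⟨_, _, rfl⟩)
      | zero => simpa using Submodule.zero_mem _
      | add y z _ _ ihy ihz => rw [lie_add]; exact add_mem ihy ihz
      | smul c y _ ihy => rw [lie_smul]; exact Submodule.smul_mem _ _ ihy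
    | zero => intro y hy; simpa using Submodule.zero_mem _
    | add x z _ _ ihx ihz =>
      intro y hy; rw [add_lie]; exact add_mem (ihx y hy) (ihz y hy)
    | smul c x _ ihx =>
      intro y hy; rw [smul_lie]; exact Submodule.smul_mem _ _ (ihx y hy)
  set Sub : LieSubalgebra K T :=
    { Submodule.span K {x : T | ∃ a b, t a b = x} with
      lie_mem' := fun hx hy => hlie _ hx _ hy } with hSub
  have f'rels : ∀ (a b : M), t a b ∈ Sub :=
    fun a b => Submodule.subset_span ⟨a, b, rfl⟩
  set f' : M →ₗ[K] M →ₗ[K] Sub :=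
    LinearMap.mk₂ K (fun a b => (⟨t a b, f'rels a b⟩ : Sub))
      (fun m₁ m₂ n => Subtype.ext
        (show t (m₁+m₂) n = t m₁ n + t m₂ n by rw [map_add, LinearMap.add_apply]))
      (fun c m n => Subtype.ext
        (show t (c•m) n = c • t m n by rw [map_smul, LinearMap.smul_apply]))
      (fun m n₁ n₂ => Subtype.ext (map_add _ _ _))
      (fun c m n => Subtype.ext (map_smul _ _ _)) with hf'
  obtain ⟨ψ, hψ, -⟩ := hT'.lift Sub f'
    (fun a a' b => Subtype.ext (by simpa [hf', bracketMap] using R3a a a' b))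
    (fun a b b' => Subtype.ext (by simpa [hf', bracketMap] using R3b a b b'))
    (fun a b a' b' => Subtype.ext (by simpa [hf', bracketMap] using R4 a b a' b'))
  obtain ⟨θ, hθ, hθu⟩ := hT'.lift T t hT'.rel3a hT'.rel3b hT'.rel4
  have h1 : Sub.incl.comp ψ = θ := by
    apply hθu
    intro a b
    simp only [LieHom.comp_apply, hψ]
    rfl
  have h2 : (LieHom.id : T →ₗ⁅K⁆ T) = θ := hθu _ (fun a b => rfl)
  have hmem : ∀ x : T, x ∈ Submodule.span K {x : T | ∃ a b, t a b = x} := by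
    intro x
    have hx : ((ψ x : Sub) : T) = x := LieHom.congr_fun (h1.trans h2.symm) x
    exact hx ▸ (ψ x).2
  -- the braiding identity on all of T
  have gen : ∀ (a b : M) (y : T), ⁅t a b, y⁆ = t ⁅a,b⁆ (dT y) := by
    intro a b y
    induction hmem y using Submodule.span_induction with
    | mem y hy =>
      obtain ⟨a', b', rfl⟩ := hy
      rw [R4, hd, tneg b a, neg_neg]
    | zero => simp
    | add y z _ _ ihy ihz => rw [lie_add, ihy, ihz, map_add dT, map_add]
    | smul c y _ ihy => rw [lie_smul, ihy, map_smul dT, map_smul]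
  have hbr : ∀ x y : T, ⁅x, y⁆ = t (dT x) (dT y) := by
    intro x y
    induction hmem x using Submodule.span_induction with
    | mem x hx => obtain ⟨a, b, rfl⟩ := hx; rw [gen, hd]
    | zero => simp
    | add x z _ _ ihx ihz =>
      rw [add_lie, ihx, ihz, map_add dT, map_add, LinearMap.add_apply]
    | smul c x _ ihx =>
      rw [smul_lie, ihx, map_smul dT, map_smul, LinearMap.smul_apply]
  have hb3 : ∀ (x : T) (n : M), t (dT x) n = - t n (dT x) := by
    intro x n
    induction hmem x using Submodule.span_induction with
    | mem x hx =>
      obtain ⟨a, b, rfl⟩ := hx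
      rw [hd, hsym n a b, neg_neg]
    | zero => simp
    | add x z _ _ ihx ihz =>
      rw [map_add dT, map_add, LinearMap.add_apply, ihx, ihz, map_add]
      abel
    | smul c x _ ihx =>
      rw [map_smul dT, map_smul, LinearMap.smul_apply, ihx, map_smul]
      module
  refine ⟨dT, actT, hd, fun m a b => by rw [actT_apply, hd], ?_, ?_⟩
  · constructor
    · intro n n' x
      rw [actT_apply, actT_apply, actT_apply, actT_apply, actT_apply, hd, hd]
      exact R3a n n' (dT x)
    · intro n x y
      rw [actT_apply, actT_apply, actT_apply, LieHom.map_lie,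
        hbr (t n (dT x)) y, hbr x (t n (dT y)), hd n (dT x), hd n (dT y)]
      have hR := R3b n (dT x) (dT y)
      have h1' := hsym (dT x) n (dT y)
      have h2' := tneg n (dT y) (dT x)
      have h3' := tneg n (dT x) (dT y)
      linear_combination (norm := module) hR - h1' + h2' - h3'
    · intro n x
      rw [actT_apply, hd]
    · intro x y
      rw [actT_apply]
      exact (hbr x y).symm
  · constructor
    · exact hd
    · exact fun x y => (hbr x y).symm
    · intro x n
      rw [actT_apply]
      exact hb3 x n
    · exact fun n x => rfl
    · intro n n' n''
      have hR := R3b n n' n''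
      have h1' := tneg n n' n''
      have h2' := tneg n n'' n'
      linear_combination (norm := module) hR - h1' + h2'
    · exact fun n n' n'' => R3a n n' n''
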